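/- arXiv:math/0512027 — 2 statements merged into one kernel-verified Lean document; each statement's English description precedes it below -/
import Mathlib

section
/- Let d ≥ 1. For every (s_1,…,s_d) ∈ ℂ^d in the region (R), the multiple zeta function Z_d(F_q[T]; s_1,…,s_d) is nonzero. -/
open Polynomial Finset

/-- Monic polynomials of `natDegree n` correspond to polynomials of degree `< n`. -/
noncomputable def MZaux.monicEquiv (F : Type*) [Field F] (n : ℕ) :
    {p : F[X] // p.Monic ∧ p.natDegree = n} ≃ Polynomial.degreeLT F n where
  toFun p := ⟨p.1 - X ^ n, by
    obtain ⟨p, hp, hd⟩ := p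
    simp only
    rw [Polynomial.mem_degreeLT]
    have h0 : p.degree = ((n : ℕ) : WithBot ℕ) := by
      rw [degree_eq_natDegree hp.ne_zero, hd]
    have h := Polynomial.degree_sub_lt (p := p) (q := (X : F[X]) ^ n)
      (by rw [h0, degree_X_pow]) hp.ne_zero
      (by rw [hp.leadingCoeff, leadingCoeff_X_pow])
    rwa [h0] at h⟩
  invFun q := ⟨X ^ n + q.1, by
    have hq : (q.1 : F[X]).degree < n := Polynomial.mem_degreeLT.mp q.2
    refine ⟨Polynomial.monic_X_pow_add hq, ?_⟩
    have hdeg : (X ^ n + q.1 : F[X]).degree = ((n : ℕ) : WithBot ℕ) := by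
      rw [Polynomial.degree_add_eq_left_of_degree_lt (by rwa [degree_X_pow]), degree_X_pow]
    exact Polynomial.natDegree_eq_of_degree_eq_some hdeg⟩
  left_inv p := Subtype.ext (by ring)
  right_inv q := Subtype.ext (by push_cast; ring)

noncomputable instance MZaux.instFintypeMonic (F : Type*) [Field F] [Fintype F] (n : ℕ) :
    Fintype {p : F[X] // p.Monic ∧ p.natDegree = n} :=
  Fintype.ofEquiv (Fin n → F)
    ((MZaux.monicEquiv F n).trans (Polynomial.degreeLTEquiv F n).toEquiv).symm

lemma MZaux.card_monic (F : Type*) [Field F] [Fintype F] (n : ℕ) :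
    Fintype.card {p : F[X] // p.Monic ∧ p.natDegree = n} = Fintype.card F ^ n := by
  rw [Fintype.card_congr ((MZaux.monicEquiv F n).trans (Polynomial.degreeLTEquiv F n).toEquiv)]
  simp [Fintype.card_fun]

open Finset

lemma MZaux.hasSum_pi_geom (d : ℕ) :
    ∀ {K : Type} [NormedField K] [CompleteSpace K] (z : Fin d → K),
      (∀ j, ‖z j‖ < 1) →
      HasSum (fun m : Fin d → ℕ => ∏ j, z j ^ m j) (∏ j, (1 - z j)⁻¹) := by
  induction d with
  | zero =>
    intro K _ _ z _
    simpa using hasSum_unique (fun m : Fin 0 → ℕ => ∏ j, z j ^ m j)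
  | succ n ih =>
    intro K _ _ z hz
    have h0 : HasSum (fun k : ℕ => z 0 ^ k) (1 - z 0)⁻¹ :=
      hasSum_geometric_of_norm_lt_one (hz 0)
    have hrest := ih (fun j => z j.succ) fun j => hz j.succ
    have hnorm1 : Summable fun k : ℕ => ‖z 0 ^ k‖ := by
      simpa [norm_pow] using
        (hasSum_geometric_of_norm_lt_one (ξ := ‖z 0‖) (by simpa using hz 0)).summable
    have hnorm2 : Summable fun m : Fin n → ℕ => ‖∏ j, z j.succ ^ m j‖ := by
      have h := ih (K := ℝ) (fun j => ‖z j.succ‖) (fun j => by simpa using hz j.succ)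
      exact h.summable.congr fun m => by simp [norm_prod, norm_pow]
    have hsum2 : Summable fun p : ℕ × (Fin n → ℕ) =>
        (fun k : ℕ => z 0 ^ k) p.1 * (fun m : Fin n → ℕ => ∏ j, z j.succ ^ m j) p.2 := by
      apply summable_mul_of_summable_norm hnorm1 hnorm2
    have hmul := h0.mul hrest hsum2
    refine ((Fin.consEquiv fun _ : Fin (n + 1) => ℕ).hasSum_iff).mp ?_
    have goal_eq : ((fun m : Fin (n + 1) → ℕ => ∏ j, z j ^ m j) ∘
        (Fin.consEquiv fun _ => ℕ)) =
        fun p : ℕ × (Fin n → ℕ) => z 0 ^ p.1 * ∏ j, z j.succ ^ p.2 j := by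
      funext p
      simp [Fin.consEquiv, Fin.prod_univ_succ]
    rw [goal_eq, Fin.prod_univ_succ]
    exact hmul

lemma MZaux.fin_Iic_zero {d : ℕ} : Finset.Iic (0 : Fin (d + 1)) = {0} := by
  ext j
  simp [Fin.le_zero_iff]

lemma MZaux.fin_Iic_succ {d : ℕ} (i : Fin d) :
    Finset.Iic (i.succ : Fin (d + 1)) = insert i.succ (Finset.Iic i.castSucc) := by
  ext j
  simp only [Finset.mem_Iic, Finset.mem_insert, Fin.le_def, Fin.ext_iff, Fin.val_succ,
    Fin.coe_castSucc]
  omega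

lemma MZaux.succ_not_mem_Iic {d : ℕ} (i : Fin d) :
    (i.succ : Fin (d + 1)) ∉ Finset.Iic i.castSucc := by
  simp only [Finset.mem_Iic, Fin.le_def, Fin.val_succ, Fin.coe_castSucc]
  omega

lemma MZaux.sum_Iic_cases {d : ℕ} (n : Fin (d + 1) → ℕ) (hmono : Monotone n) (k : Fin (d + 1)) :
    ∑ j ∈ Finset.Iic k,
      (Fin.cases (n 0) (fun i => n i.succ - n i.castSucc) : Fin (d + 1) → ℕ) j = n k := by
  induction k using Fin.induction with
  | zero => simp [MZaux.fin_Iic_zero]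
  | succ i ihw =>
    rw [MZaux.fin_Iic_succ, Finset.sum_insert (MZaux.succ_not_mem_Iic i), ihw]
    simp only [Fin.cases_succ]
    have hle : n i.castSucc ≤ n i.succ := hmono (le_of_lt Fin.castSucc_lt_succ)
    omega

lemma MZaux.partial_sum_inj {d : ℕ} {m m' : Fin (d + 1) → ℕ}
    (h : ∀ k, ∑ j ∈ Finset.Iic k, m j = ∑ j ∈ Finset.Iic k, m' j) : m = m' := by
  funext k
  induction k using Fin.cases with
  | zero => simpa [MZaux.fin_Iic_zero] using h 0
  | succ i =>
    have h1 := h i.succ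
    have h2 := h i.castSucc
    rw [MZaux.fin_Iic_succ, Finset.sum_insert (MZaux.succ_not_mem_Iic i),
      Finset.sum_insert (MZaux.succ_not_mem_Iic i)] at h1
    omega

lemma MZaux.nat_pow_cpow (q n : ℕ) (s : ℂ) :
    ((q : ℂ) ^ n) ^ s = ((q : ℂ) ^ s) ^ n := by
  have him : (Complex.log q * (n : ℂ)).im = 0 := by
    simp [Complex.mul_im, Complex.log_im, Complex.natCast_arg]
  rw [← Complex.cpow_natCast (q : ℂ) n,
    ← Complex.cpow_mul _ (by rw [him]; exact neg_lt_zero.mpr Real.pi_pos)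
      (by rw [him]; exact le_of_lt Real.pi_pos),
    ← Complex.cpow_nat_mul]

noncomputable def MZaux.masterEquiv (F : Type*) [Field F] (d : ℕ) :
    (Σ m : Fin (d + 1) → ℕ, ∀ k : Fin (d + 1),
        {p : Polynomial F // p.Monic ∧ p.natDegree = ∑ j ∈ Finset.Iic k, m j}) ≃
      {f : Fin (d + 1) → Polynomial F //
        (∀ k, (f k).Monic) ∧ Monotone fun k => (f k).natDegree} :=
  Equiv.ofBijective
    (fun x => ⟨fun k => (x.2 k).1, fun k => (x.2 k).2.1, by
      intro a b hab
      simp only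
      rw [(x.2 a).2.2, (x.2 b).2.2]
      exact Finset.sum_le_sum_of_subset (Finset.Iic_subset_Iic.mpr hab)⟩)
    (by
      constructor
      · rintro ⟨m, p⟩ ⟨m', p'⟩ hxy
        have hv : ∀ k, (p k).1 = (p' k).1 := fun k =>
          congrFun (congrArg Subtype.val hxy) k
        have hdeg : ∀ k, ∑ j ∈ Finset.Iic k, m j = ∑ j ∈ Finset.Iic k, m' j := fun k => by
          rw [← (p k).2.2, ← (p' k).2.2, hv k]
        obtain rfl : m = m' := MZaux.partial_sum_inj hdeg
        simp only [Sigma.mk.inj_iff, heq_eq_eq]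
        exact ⟨trivial, funext fun k => Subtype.ext (hv k)⟩
      · rintro ⟨f, hmonic, hmono⟩
        have hS := MZaux.sum_Iic_cases (fun k => (f k).natDegree) hmono
        exact ⟨⟨Fin.cases ((f 0).natDegree)
            (fun i => (f i.succ).natDegree - (f i.castSucc).natDegree),
          fun k => ⟨f k, hmonic k, (hS k).symm⟩⟩, rfl⟩)

set_option maxHeartbeats 1000000 in
/-- On the region (R), the multiple zeta function
`Z_d(F_q[T]; s_1,…,s_d)` is nonzero. -/
theorem multiple_zeta_FqT_ne_zero
    (F : Type*) [Field F] [Fintype F] (d : ℕ) (hd : 1 ≤ d)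
    (s : Fin d → ℂ)
    (hs : ∀ k : Fin d, (d : ℝ) - (k.val : ℝ) < (∑ j ∈ Finset.Ici k, s j).re) :
    (∑' f : {f : Fin d → Polynomial F //
        (∀ k, (f k).Monic) ∧ Monotone fun k => (f k).natDegree},
      ∏ k : Fin d, ((Fintype.card F : ℂ) ^ (f.1 k).natDegree : ℂ) ^ (-(s k))) ≠ 0 := by
  obtain ⟨d', rfl⟩ : ∃ d', d = d' + 1 := ⟨d - 1, by omega⟩
  have hq1 : 1 < Fintype.card F := Fintype.one_lt_card
  set q : ℕ := Fintype.card F with hqdef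
  have hq0 : (0 : ℝ) < (q : ℝ) := by
    have : 0 < q := by omega
    exact_mod_cast this
  set b : Fin (d' + 1) → ℂ := fun k => (q : ℂ) * (q : ℂ) ^ (-(s k)) with hbdef
  set z : Fin (d' + 1) → ℂ := fun j => ∏ k ∈ Finset.Ici j, b k with hzdef
  have hbnorm : ∀ k, ‖b k‖ = Real.exp (Real.log q * (1 - (s k).re)) := by
    intro k
    simp only [hbdef]
    rw [norm_mul]
    have h1 : ‖(q : ℂ)‖ = (q : ℝ) := by simp
    have h2 : ‖(q : ℂ) ^ (-(s k))‖ = (q : ℝ) ^ (-(s k).re) := by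
      rw [show ((q : ℂ)) = (((q : ℝ)) : ℂ) by push_cast; ring]
      rw [Complex.norm_cpow_eq_rpow_re_of_pos hq0]
      simp
    have h3 : (q : ℝ) ^ (1 - (s k).re : ℝ) = (q : ℝ) * (q : ℝ) ^ (-(s k).re) := by
      rw [show (1 - (s k).re : ℝ) = 1 + (-(s k).re) by ring, Real.rpow_add hq0, Real.rpow_one]
    rw [h1, h2, ← h3, Real.rpow_def_of_pos hq0]
  have hznorm : ∀ j, ‖z j‖ < 1 := by
    intro j
    simp only [hzdef]
    rw [norm_prod, Finset.prod_congr rfl fun k _ => hbnorm k, ← Real.exp_sum,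
      Real.exp_lt_one_iff, ← Finset.mul_sum]
    apply mul_neg_of_pos_of_neg (Real.log_pos (by exact_mod_cast hq1))
    have hcard : ((Finset.Ici j).card : ℝ) = ((d' + 1 : ℕ) : ℝ) - (j.val : ℝ) := by
      rw [Fin.card_Ici]
      have hle : j.val ≤ d' + 1 := le_of_lt j.isLt
      push_cast [Nat.cast_sub hle]
      ring
    have hsum : ∑ k ∈ Finset.Ici j, (1 - (s k).re) =
        ((Finset.Ici j).card : ℝ) - (∑ k ∈ Finset.Ici j, s k).re := by
      rw [Finset.sum_sub_distrib, Finset.sum_const, nsmul_eq_mul, mul_one, Complex.re_sum]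
    rw [hsum, hcard]
    have hj := hs j
    push_cast at hj ⊢
    linarith
  have hcg : ∀ m : Fin (d' + 1) → ℕ,
      ((Fintype.card (∀ k : Fin (d' + 1),
        {p : Polynomial F // p.Monic ∧ p.natDegree = ∑ j ∈ Finset.Iic k, m j}) : ℂ) *
        ∏ k, ((q : ℂ) ^ (∑ j ∈ Finset.Iic k, m j)) ^ (-(s k))) = ∏ j, z j ^ m j := by
    intro m
    rw [Fintype.card_pi,
      Finset.prod_congr rfl fun k (_ : k ∈ Finset.univ) => MZaux.card_monic F _]
    push_cast
    rw [← Finset.prod_mul_distrib]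
    have hfac : ∀ k : Fin (d' + 1),
        (q : ℂ) ^ (∑ j ∈ Finset.Iic k, m j) *
          ((q : ℂ) ^ (∑ j ∈ Finset.Iic k, m j)) ^ (-(s k)) =
        b k ^ (∑ j ∈ Finset.Iic k, m j) := by
      intro k
      rw [MZaux.nat_pow_cpow]
      simp only [hbdef]
      rw [mul_pow]
    rw [Finset.prod_congr rfl fun k _ => hfac k,
      Finset.prod_congr rfl fun k (_ : k ∈ Finset.univ) =>
        (Finset.prod_pow_eq_pow_sum (Finset.Iic k) m (b k)).symm,
      Finset.prod_comm' (t' := Finset.univ) (s' := fun j => Finset.Ici j) (fun k j => by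
        simp only [Finset.mem_univ, Finset.mem_Iic, Finset.mem_Ici, true_and, and_true])]
    refine Finset.prod_congr rfl fun j _ => ?_
    rw [Finset.prod_pow]
  have hGeo : HasSum (fun m : Fin (d' + 1) → ℕ => ∏ j, z j ^ m j) (∏ j, (1 - z j)⁻¹) :=
    MZaux.hasSum_pi_geom _ z hznorm
  have hfib : ∀ m : Fin (d' + 1) → ℕ,
      HasSum (fun _ : (∀ k : Fin (d' + 1),
          {p : Polynomial F // p.Monic ∧ p.natDegree = ∑ j ∈ Finset.Iic k, m j}) =>
        ∏ k, ((q : ℂ) ^ (∑ j ∈ Finset.Iic k, m j)) ^ (-(s k)))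
        (∏ j, z j ^ m j) := by
    intro m
    have h := hasSum_fintype (fun _ : (∀ k : Fin (d' + 1),
        {p : Polynomial F // p.Monic ∧ p.natDegree = ∑ j ∈ Finset.Iic k, m j}) =>
      ∏ k, ((q : ℂ) ^ (∑ j ∈ Finset.Iic k, m j)) ^ (-(s k)))
    rwa [Finset.sum_const, Finset.card_univ, nsmul_eq_mul, hcg m] at h
  have hreal := MZaux.hasSum_pi_geom (d' + 1) (K := ℝ) (fun j => ‖z j‖)
      (fun j => by simpa using hznorm j)
  have key : ∀ m : Fin (d' + 1) → ℕ,
      (∑' _ : (∀ k : Fin (d' + 1),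
          {p : Polynomial F // p.Monic ∧ p.natDegree = ∑ j ∈ Finset.Iic k, m j}),
        ‖∏ k, ((q : ℂ) ^ (∑ j ∈ Finset.Iic k, m j)) ^ (-(s k))‖) = ∏ j, ‖z j‖ ^ m j := by
    intro m
    rw [tsum_fintype, Finset.sum_const, Finset.card_univ, nsmul_eq_mul]
    have hno : ((Fintype.card (∀ k : Fin (d' + 1),
        {p : Polynomial F // p.Monic ∧ p.natDegree = ∑ j ∈ Finset.Iic k, m j}) : ℕ) : ℝ) *
        ‖∏ k, ((q : ℂ) ^ (∑ j ∈ Finset.Iic k, m j)) ^ (-(s k))‖ =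
        ‖((Fintype.card (∀ k : Fin (d' + 1),
          {p : Polynomial F // p.Monic ∧ p.natDegree = ∑ j ∈ Finset.Iic k, m j}) : ℕ) : ℂ) *
          ∏ k, ((q : ℂ) ^ (∑ j ∈ Finset.Iic k, m j)) ^ (-(s k))‖ := by
      rw [norm_mul, Complex.norm_natCast]
    rw [hno, hcg m, norm_prod]
    exact Finset.prod_congr rfl fun j _ => (norm_pow _ _)
  have hsummable : Summable (fun x : (Σ m : Fin (d' + 1) → ℕ, ∀ k : Fin (d' + 1),
      {p : Polynomial F // p.Monic ∧ p.natDegree = ∑ j ∈ Finset.Iic k, m j}) =>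
      ∏ k, ((q : ℂ) ^ (∑ j ∈ Finset.Iic k, x.1 j)) ^ (-(s k))) := by
    apply Summable.of_norm
    apply (summable_sigma_of_nonneg fun _ => norm_nonneg _).mpr
    exact ⟨fun m => Summable.of_finite, hreal.summable.congr fun m => (key m).symm⟩
  have hMain : HasSum (fun x : (Σ m : Fin (d' + 1) → ℕ, ∀ k : Fin (d' + 1),
      {p : Polynomial F // p.Monic ∧ p.natDegree = ∑ j ∈ Finset.Iic k, m j}) =>
      ∏ k, ((q : ℂ) ^ (∑ j ∈ Finset.Iic k, x.1 j)) ^ (-(s k))) (∏ j, (1 - z j)⁻¹) :=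
    hGeo.sigma_of_hasSum hfib hsummable
  have hcomp : ((fun f : {f : Fin (d' + 1) → Polynomial F //
        (∀ k, (f k).Monic) ∧ Monotone fun k => (f k).natDegree} =>
      ∏ k, ((q : ℂ) ^ (f.1 k).natDegree) ^ (-(s k))) ∘ (MZaux.masterEquiv F d')) =
      fun x : (Σ m : Fin (d' + 1) → ℕ, ∀ k : Fin (d' + 1),
        {p : Polynomial F // p.Monic ∧ p.natDegree = ∑ j ∈ Finset.Iic k, m j}) =>
      ∏ k, ((q : ℂ) ^ (∑ j ∈ Finset.Iic k, x.1 j)) ^ (-(s k)) := by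
    funext x
    refine Finset.prod_congr rfl fun k _ => ?_
    rw [show (((MZaux.masterEquiv F d') x).1) k = (x.2 k).1 from rfl, (x.2 k).2.2]
  have hFinal : HasSum (fun f : {f : Fin (d' + 1) → Polynomial F //
        (∀ k, (f k).Monic) ∧ Monotone fun k => (f k).natDegree} =>
      ∏ k, ((q : ℂ) ^ (f.1 k).natDegree) ^ (-(s k))) (∏ j, (1 - z j)⁻¹) :=
    (MZaux.masterEquiv F d').hasSum_iff.mp (by rw [hcomp]; exact hMain)
  rw [hFinal.tsum_eq]
  refine Finset.prod_ne_zero_iff.mpr fun j _ => inv_ne_zero fun h => ?_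
  have h1 : z j = 1 := (sub_eq_zero.mp h).symm
  have h2 := hznorm j
  rw [h1] at h2
  simp at h2
end

section
/- Let q ≥ 2, g ≥ 1 and h ≥ 1 be integers and let (b_n)_{n≥0} be a sequence of natural numbers with b_n = h(q^{n−g+1} − 1)/(q − 1) for every n > 2g − 2. Then there exists a polynomial P(X, Y) with rational coefficients, of degree at most 2g + 1 in X and at most (1 + 2 + ⋯ + 2g) + 2g − 2 in Y, such that for every (s, w) ∈ ℂ² with Re(s + w) > 2 and Re(w) > 1, setting u = q^{−(s+w)} and v = q^{−w}, one has Σ_{0 ≤ n ≤ m} b_n b_m q^{−ns} q^{−mw} = P(u, v)/Q(u, v), where Q(u, v) = (1−u)(1−qu)(1−q²u)(1−v)(1−qv)·∏_{n=0}^{2g−2} v^n (which is nonzero on this region). -/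
open Complex Finset

/-! Auxiliary lemmas -/

lemma geo_ne (x : ℂ) (hx : ‖x‖ < 1) : 1 - x ≠ 0 := by
  intro hc
  have : x = 1 := by linear_combination -hc
  simp [this] at hx

lemma tsum2 (A B x y : ℂ) (hx : ‖x‖ < 1) (hy : ‖y‖ < 1) :
    ∑' k : ℕ, (A * x ^ k - B * y ^ k) = A * (1 - x)⁻¹ - B * (1 - y)⁻¹ := by
  rw [Summable.tsum_sub ((summable_geometric_of_norm_lt_one hx).mul_left A)
    ((summable_geometric_of_norm_lt_one hy).mul_left B), tsum_mul_left, tsum_mul_left,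
    tsum_geometric_of_norm_lt_one hx, tsum_geometric_of_norm_lt_one hy]

lemma tsum4 (A B C D x y z : ℂ) (hx : ‖x‖ < 1) (hy : ‖y‖ < 1) (hz : ‖z‖ < 1) :
    ∑' j : ℕ, (A * x ^ j - B * y ^ j - C * y ^ j + D * z ^ j)
      = A * (1 - x)⁻¹ - B * (1 - y)⁻¹ - C * (1 - y)⁻¹ + D * (1 - z)⁻¹ := by
  have sx := (summable_geometric_of_norm_lt_one hx).mul_left A
  have sy := (summable_geometric_of_norm_lt_one hy).mul_left B
  have sy' := (summable_geometric_of_norm_lt_one hy).mul_left C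
  have sz := (summable_geometric_of_norm_lt_one hz).mul_left D
  rw [Summable.tsum_add ((sx.sub sy).sub sy') sz, Summable.tsum_sub (sx.sub sy) sy', Summable.tsum_sub sx sy,
    tsum_mul_left, tsum_mul_left, tsum_mul_left, tsum_mul_left,
    tsum_geometric_of_norm_lt_one hx, tsum_geometric_of_norm_lt_one hy,
    tsum_geometric_of_norm_lt_one hz]

def leEquiv : (ℕ × ℕ) ≃ {p : ℕ × ℕ // p.1 ≤ p.2} where
  toFun nk := ⟨(nk.1, nk.1 + nk.2), Nat.le_add_right _ _⟩
  invFun p := (p.1.1, p.1.2 - p.1.1)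
  left_inv nk := by simp
  right_inv p := by
    obtain ⟨⟨a, c⟩, hp⟩ := p
    simp at hp ⊢
    omega

/-! The main analytic computation -/

lemma dz_tsum_eq (q g h : ℕ) (hq : 2 ≤ q) (hg : 1 ≤ g) (b : ℕ → ℕ)
    (hb : ∀ n : ℕ, 2 * g - 2 < n → b n * (q - 1) = h * (q ^ (n - g + 1) - 1))
    (u v : ℂ) (hu : (q : ℝ) ^ 2 * ‖u‖ < 1) (hv : (q : ℝ) * ‖v‖ < 1) :
    ∑' p : ℕ × ℕ, ((b p.1 : ℂ) * (b (p.1 + p.2) : ℂ) * u ^ p.1 * v ^ p.2)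
      = (∑ n ∈ range (2 * g - 1), (b n : ℂ) * u ^ n *
          ((∑ k ∈ range (2 * g - 1 - n), (b (n + k) : ℂ) * v ^ k) +
            v ^ (2 * g - 1 - n) * ((h : ℂ) / ((q : ℂ) - 1)) *
              ((q : ℂ) ^ g * (1 - (q : ℂ) * v)⁻¹ - (1 - v)⁻¹)))
        + ((h : ℂ) / ((q : ℂ) - 1)) ^ 2 * u ^ (2 * g - 1) *
          ((q : ℂ) ^ g * (q : ℂ) ^ g * ((1 - (q : ℂ) ^ 2 * u)⁻¹ * (1 - (q : ℂ) * v)⁻¹)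
            - (q : ℂ) ^ g * ((1 - (q : ℂ) * u)⁻¹ * (1 - v)⁻¹)
            - (q : ℂ) ^ g * ((1 - (q : ℂ) * u)⁻¹ * (1 - (q : ℂ) * v)⁻¹)
            + (1 - u)⁻¹ * (1 - v)⁻¹) := by
  set N := 2 * g - 1 with hN
  set cc : ℂ := (h : ℂ) / ((q : ℂ) - 1) with hcc
  have hq1R : (1 : ℝ) ≤ (q : ℝ) := by exact_mod_cast Nat.one_le_of_lt hq
  have hqC : ((q : ℂ) - 1) ≠ 0 := by
    intro hc
    have : (q : ℂ) = ((1 : ℕ) : ℂ) := by push_cast; linear_combination hc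
    have := Nat.cast_injective this
    omega
  have hu0 : (0 : ℝ) ≤ ‖u‖ := norm_nonneg u
  have hv0 : (0 : ℝ) ≤ ‖v‖ := norm_nonneg v
  have hvn : ‖v‖ < 1 := by nlinarith
  have hun : ‖u‖ < 1 := by nlinarith
  have hqvn : ‖(q : ℂ) * v‖ < 1 := by
    rw [norm_mul, Complex.norm_natCast]; exact hv
  have hqun : ‖(q : ℂ) * u‖ < 1 := by
    rw [norm_mul, Complex.norm_natCast]; nlinarith
  have hq2un : ‖(q : ℂ) ^ 2 * u‖ < 1 := by
    rw [norm_mul, norm_pow, Complex.norm_natCast]; exact hu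
  -- cast of the recurrence
  have hbC : ∀ m : ℕ, N ≤ m → (b m : ℂ) = cc * ((q : ℂ) ^ (m - g + 1) - 1) := by
    intro m hm
    have h1 : 2 * g - 2 < m := by omega
    have h2 := hb m h1
    have h2C : (b m : ℂ) * ((q : ℂ) - 1) = (h : ℂ) * ((q : ℂ) ^ (m - g + 1) - 1) := by
      have hq1 : 1 ≤ q := by omega
      have hqe : 1 ≤ q ^ (m - g + 1) := Nat.one_le_pow _ _ (by omega)
      exact_mod_cast congrArg (Nat.cast : ℕ → ℂ) h2
    rw [hcc]
    field_simp
    linear_combination h2C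
  -- uniform bound on b
  set C₀ : ℕ := (range N).sup b + h * q with hC₀
  have hCnat : ∀ m, b m ≤ C₀ * q ^ m := by
    intro m
    rcases lt_or_ge m N with hm | hm
    · have h1 : b m ≤ C₀ := le_trans (Finset.le_sup (mem_range.mpr hm)) (Nat.le_add_right _ _)
      calc b m ≤ C₀ := h1
        _ = C₀ * 1 := (mul_one _).symm
        _ ≤ C₀ * q ^ m := Nat.mul_le_mul_left _ (Nat.one_le_pow _ _ (by omega))
    · have h1 : 2 * g - 2 < m := by omega
      have h2 := hb m h1
      have h3 : b m ≤ b m * (q - 1) := Nat.le_mul_of_pos_right _ (by omega)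
      have h4 : h * (q ^ (m - g + 1) - 1) ≤ h * q ^ (m - g + 1) :=
        Nat.mul_le_mul_left _ (Nat.sub_le _ _)
      have h5 : q ^ (m - g + 1) ≤ q ^ (m + 1) := Nat.pow_le_pow_right (by omega) (by omega)
      calc b m ≤ b m * (q - 1) := h3
        _ = h * (q ^ (m - g + 1) - 1) := h2
        _ ≤ h * q ^ (m + 1) := le_trans h4 (Nat.mul_le_mul_left _ h5)
        _ = (h * q) * q ^ m := by ring
        _ ≤ C₀ * q ^ m := Nat.mul_le_mul_right _ (Nat.le_add_left _ _)
  have hC : ∀ m, (b m : ℝ) ≤ (C₀ : ℝ) * (q : ℝ) ^ m := by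
    intro m; exact_mod_cast hCnat m
  -- norm bound for the double family
  have hbnd : ∀ n k : ℕ, ‖(b n : ℂ) * (b (n + k) : ℂ) * u ^ n * v ^ k‖
      ≤ (C₀ : ℝ) ^ 2 * (((q : ℝ) ^ 2 * ‖u‖) ^ n * (((q : ℝ) * ‖v‖) ^ k)) := by
    intro n k
    have e1 : ‖(b n : ℂ) * (b (n + k) : ℂ) * u ^ n * v ^ k‖
        = (b n : ℝ) * (b (n + k) : ℝ) * ‖u‖ ^ n * ‖v‖ ^ k := by
      rw [norm_mul, norm_mul, norm_mul, norm_pow, norm_pow, Complex.norm_natCast,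
        Complex.norm_natCast]
    rw [e1]
    have h1 : (b n : ℝ) * (b (n + k) : ℝ) * ‖u‖ ^ n * ‖v‖ ^ k
        ≤ ((C₀ : ℝ) * (q : ℝ) ^ n) * ((C₀ : ℝ) * (q : ℝ) ^ (n + k)) * ‖u‖ ^ n * ‖v‖ ^ k := by
      have := hC n; have := hC (n + k)
      gcongr <;> positivity
    refine h1.trans (le_of_eq ?_)
    rw [mul_pow, mul_pow, pow_add, ← pow_mul]
    ring
  have hgu : Summable (fun n : ℕ => ((q : ℝ) ^ 2 * ‖u‖) ^ n) :=
    summable_geometric_of_lt_one (by positivity) hu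
  have hgv : Summable (fun n : ℕ => ((q : ℝ) * ‖v‖) ^ n) :=
    summable_geometric_of_lt_one (by positivity) hv
  have SG : Summable (fun p : ℕ × ℕ => (b p.1 : ℂ) * (b (p.1 + p.2) : ℂ) * u ^ p.1 * v ^ p.2) := by
    apply Summable.of_norm_bounded
      (g := fun p : ℕ × ℕ => (C₀ : ℝ) ^ 2 * (((q : ℝ) ^ 2 * ‖u‖) ^ p.1 * (((q : ℝ) * ‖v‖) ^ p.2)))
      ((hgu.mul_of_nonneg hgv (fun n => by positivity) (fun n => by positivity)).mul_left _)
      (fun p => hbnd p.1 p.2)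
  have sInner : ∀ n : ℕ, Summable (fun k : ℕ => (b (n + k) : ℂ) * v ^ k) := by
    intro n
    apply Summable.of_norm_bounded
      (g := fun k : ℕ => ((C₀ : ℝ) * (q : ℝ) ^ n) * ((q : ℝ) * ‖v‖) ^ k) (hgv.mul_left _)
    intro k
    rw [norm_mul, norm_pow, Complex.norm_natCast]
    have h1 : (b (n + k) : ℝ) * ‖v‖ ^ k ≤ ((C₀ : ℝ) * (q : ℝ) ^ (n + k)) * ‖v‖ ^ k := by
      have := hC (n + k); gcongr
    refine h1.trans (le_of_eq ?_)
    rw [mul_pow, pow_add]; ring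
  have inner_tail : ∀ m : ℕ, N ≤ m →
      ∑' k : ℕ, (b (m + k) : ℂ) * v ^ k
        = cc * ((q : ℂ) ^ (m - g + 1) * (1 - (q : ℂ) * v)⁻¹ - (1 - v)⁻¹) := by
    intro m hm
    have step : ∀ k : ℕ, (b (m + k) : ℂ) * v ^ k
        = (cc * (q : ℂ) ^ (m - g + 1)) * ((q : ℂ) * v) ^ k - cc * v ^ k := by
      intro k
      rw [hbC (m + k) (by omega), show m + k - g + 1 = (m - g + 1) + k from by omega,
        pow_add, mul_pow]
      ring
    rw [tsum_congr step, tsum2 _ _ _ _ hqvn hvn]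
    ring
  have inner_full : ∀ n : ℕ, n < N →
      ∑' k : ℕ, (b (n + k) : ℂ) * v ^ k
        = (∑ k ∈ range (N - n), (b (n + k) : ℂ) * v ^ k) +
          v ^ (N - n) * cc * ((q : ℂ) ^ g * (1 - (q : ℂ) * v)⁻¹ - (1 - v)⁻¹) := by
    intro n hn
    rw [← Summable.sum_add_tsum_nat_add (N - n) (sInner n)]
    congr 1
    have step : ∀ k : ℕ, (b (n + (k + (N - n))) : ℂ) * v ^ (k + (N - n))
        = v ^ (N - n) * ((b (N + k) : ℂ) * v ^ k) := by
      intro k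
      rw [show n + (k + (N - n)) = N + k from by omega, pow_add]
      ring
    rw [tsum_congr step, tsum_mul_left, inner_tail N le_rfl,
      show N - g + 1 = g from by omega]
    ring
  have outer : ∀ n : ℕ, ∑' k : ℕ, ((b n : ℂ) * (b (n + k) : ℂ) * u ^ n * v ^ k)
      = (b n : ℂ) * u ^ n * ∑' k : ℕ, (b (n + k) : ℂ) * v ^ k := by
    intro n
    rw [← tsum_mul_left]
    exact tsum_congr fun k => by ring
  rw [Summable.tsum_prod SG]
  simp only [outer]
  have innerBound : ∀ n : ℕ, ‖∑' k : ℕ, (b (n + k) : ℂ) * v ^ k‖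
      ≤ ((C₀ : ℝ) * (q : ℝ) ^ n) * (1 - (q : ℝ) * ‖v‖)⁻¹ := by
    intro n
    have hsn : Summable fun k : ℕ => ‖(b (n + k) : ℂ) * v ^ k‖ := (sInner n).norm
    refine (norm_tsum_le_tsum_norm hsn).trans ?_
    have hb2 : ∀ k : ℕ, ‖(b (n + k) : ℂ) * v ^ k‖
        ≤ ((C₀ : ℝ) * (q : ℝ) ^ n) * ((q : ℝ) * ‖v‖) ^ k := by
      intro k
      rw [norm_mul, norm_pow, Complex.norm_natCast]
      have h1 : (b (n + k) : ℝ) * ‖v‖ ^ k ≤ ((C₀ : ℝ) * (q : ℝ) ^ (n + k)) * ‖v‖ ^ k := by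
        have := hC (n + k); gcongr
      refine h1.trans (le_of_eq ?_)
      rw [mul_pow, pow_add]; ring
    refine (Summable.tsum_le_tsum hb2 hsn (hgv.mul_left _)).trans (le_of_eq ?_)
    rw [tsum_mul_left, tsum_geometric_of_lt_one (by positivity) hv]
  have sOuter : Summable (fun n : ℕ =>
      (b n : ℂ) * u ^ n * ∑' k : ℕ, (b (n + k) : ℂ) * v ^ k) := by
    apply Summable.of_norm_bounded
      (g := fun n : ℕ => ((C₀ : ℝ) ^ 2 * (1 - (q : ℝ) * ‖v‖)⁻¹) * ((q : ℝ) ^ 2 * ‖u‖) ^ n)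
      (hgu.mul_left _)
    intro n
    rw [norm_mul, norm_mul, norm_pow, Complex.norm_natCast]
    have h2 : (0 : ℝ) ≤ (1 - (q : ℝ) * ‖v‖)⁻¹ := by
      have : (0 : ℝ) < 1 - (q : ℝ) * ‖v‖ := by linarith
      positivity
    have h1 : (b n : ℝ) * ‖u‖ ^ n * ‖∑' k : ℕ, (b (n + k) : ℂ) * v ^ k‖
        ≤ ((C₀ : ℝ) * (q : ℝ) ^ n) * ‖u‖ ^ n *
          (((C₀ : ℝ) * (q : ℝ) ^ n) * (1 - (q : ℝ) * ‖v‖)⁻¹) := by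
      have := hC n; have := innerBound n
      gcongr <;> positivity
    refine h1.trans (le_of_eq ?_)
    rw [mul_pow, ← pow_mul]
    ring
  rw [← Summable.sum_add_tsum_nat_add N sOuter]
  congr 1
  · exact Finset.sum_congr rfl fun n hn => by rw [inner_full n (mem_range.mp hn)]
  have tailstep : ∀ j : ℕ,
      (b (j + N) : ℂ) * u ^ (j + N) * ∑' k : ℕ, (b (j + N + k) : ℂ) * v ^ k
      = (cc ^ 2 * u ^ N * ((q : ℂ) ^ g * (q : ℂ) ^ g * (1 - (q : ℂ) * v)⁻¹)) * ((q : ℂ) ^ 2 * u) ^ j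
        - (cc ^ 2 * u ^ N * ((q : ℂ) ^ g * (1 - v)⁻¹)) * ((q : ℂ) * u) ^ j
        - (cc ^ 2 * u ^ N * ((q : ℂ) ^ g * (1 - (q : ℂ) * v)⁻¹)) * ((q : ℂ) * u) ^ j
        + (cc ^ 2 * u ^ N * (1 - v)⁻¹) * u ^ j := by
    intro j
    rw [inner_tail (j + N) (by omega), hbC (j + N) (by omega),
      show j + N - g + 1 = g + j from by omega, pow_add, pow_add, mul_pow, mul_pow, ← pow_mul]
    ring_nf
  rw [tsum_congr tailstep, tsum4 _ _ _ _ _ _ _ hq2un hqun hun]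
  ring

/-! The algebraic identity clearing denominators -/

lemma dzEQ0 (cq cg cc u v : ℂ) (F bb : ℕ → ℂ) (N : ℕ)
    (h1 : 1 - u ≠ 0) (h2 : 1 - cq * u ≠ 0) (h3 : 1 - cq ^ 2 * u ≠ 0)
    (h4 : 1 - v ≠ 0) (h5 : 1 - cq * v ≠ 0) :
    ((∑ n ∈ range N, bb n * u ^ n *
        (F n + v ^ (N - n) * cc * (cg * (1 - cq * v)⁻¹ - (1 - v)⁻¹)))
      + cc ^ 2 * u ^ N *
        (cg * cg * ((1 - cq ^ 2 * u)⁻¹ * (1 - cq * v)⁻¹)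
          - cg * ((1 - cq * u)⁻¹ * (1 - v)⁻¹)
          - cg * ((1 - cq * u)⁻¹ * (1 - cq * v)⁻¹)
          + (1 - u)⁻¹ * (1 - v)⁻¹))
      * ((1 - u) * (1 - cq * u) * (1 - cq ^ 2 * u) * (1 - v) * (1 - cq * v))
    = (∑ n ∈ range N, bb n * u ^ n *
        (F n * ((1 - v) * (1 - cq * v)) + v ^ (N - n) * cc * (cg * (1 - v) - (1 - cq * v))))
        * ((1 - u) * (1 - cq * u) * (1 - cq ^ 2 * u))
      + cc ^ 2 * u ^ N *
        (cg * cg * ((1 - u) * (1 - cq * u) * (1 - v))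
          - cg * ((1 - u) * (1 - cq ^ 2 * u) * (1 - cq * v))
          - cg * ((1 - u) * (1 - cq ^ 2 * u) * (1 - v))
          + (1 - cq * u) * (1 - cq ^ 2 * u) * (1 - cq * v)) := by
  rw [add_mul, Finset.sum_mul, Finset.sum_mul]
  congr 1
  · refine Finset.sum_congr rfl fun n _ => ?_
    field_simp
  · have k35 : (1 - cq ^ 2 * u)⁻¹ * (1 - cq * v)⁻¹ *
        ((1 - u) * (1 - cq * u) * (1 - cq ^ 2 * u) * (1 - v) * (1 - cq * v))
        = (1 - u) * (1 - cq * u) * (1 - v) := by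
      rw [show (1 - cq ^ 2 * u)⁻¹ * (1 - cq * v)⁻¹ *
        ((1 - u) * (1 - cq * u) * (1 - cq ^ 2 * u) * (1 - v) * (1 - cq * v))
        = (1 - u) * (1 - cq * u) * (1 - v) * ((1 - cq ^ 2 * u)⁻¹ * (1 - cq ^ 2 * u))
          * ((1 - cq * v)⁻¹ * (1 - cq * v)) from by ring,
        inv_mul_cancel₀ h3, inv_mul_cancel₀ h5, mul_one, mul_one]
    have k24 : (1 - cq * u)⁻¹ * (1 - v)⁻¹ *
        ((1 - u) * (1 - cq * u) * (1 - cq ^ 2 * u) * (1 - v) * (1 - cq * v))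
        = (1 - u) * (1 - cq ^ 2 * u) * (1 - cq * v) := by
      rw [show (1 - cq * u)⁻¹ * (1 - v)⁻¹ *
        ((1 - u) * (1 - cq * u) * (1 - cq ^ 2 * u) * (1 - v) * (1 - cq * v))
        = (1 - u) * (1 - cq ^ 2 * u) * (1 - cq * v) * ((1 - cq * u)⁻¹ * (1 - cq * u))
          * ((1 - v)⁻¹ * (1 - v)) from by ring,
        inv_mul_cancel₀ h2, inv_mul_cancel₀ h4, mul_one, mul_one]
    have k25 : (1 - cq * u)⁻¹ * (1 - cq * v)⁻¹ *
        ((1 - u) * (1 - cq * u) * (1 - cq ^ 2 * u) * (1 - v) * (1 - cq * v))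
        = (1 - u) * (1 - cq ^ 2 * u) * (1 - v) := by
      rw [show (1 - cq * u)⁻¹ * (1 - cq * v)⁻¹ *
        ((1 - u) * (1 - cq * u) * (1 - cq ^ 2 * u) * (1 - v) * (1 - cq * v))
        = (1 - u) * (1 - cq ^ 2 * u) * (1 - v) * ((1 - cq * u)⁻¹ * (1 - cq * u))
          * ((1 - cq * v)⁻¹ * (1 - cq * v)) from by ring,
        inv_mul_cancel₀ h2, inv_mul_cancel₀ h5, mul_one, mul_one]
    have k14 : (1 - u)⁻¹ * (1 - v)⁻¹ *
        ((1 - u) * (1 - cq * u) * (1 - cq ^ 2 * u) * (1 - v) * (1 - cq * v))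
        = (1 - cq * u) * (1 - cq ^ 2 * u) * (1 - cq * v) := by
      rw [show (1 - u)⁻¹ * (1 - v)⁻¹ *
        ((1 - u) * (1 - cq * u) * (1 - cq ^ 2 * u) * (1 - v) * (1 - cq * v))
        = (1 - cq * u) * (1 - cq ^ 2 * u) * (1 - cq * v) * ((1 - u)⁻¹ * (1 - u))
          * ((1 - v)⁻¹ * (1 - v)) from by ring,
        inv_mul_cancel₀ h1, inv_mul_cancel₀ h4, mul_one, mul_one]
    calc cc ^ 2 * u ^ N *
        (cg * cg * ((1 - cq ^ 2 * u)⁻¹ * (1 - cq * v)⁻¹)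
          - cg * ((1 - cq * u)⁻¹ * (1 - v)⁻¹)
          - cg * ((1 - cq * u)⁻¹ * (1 - cq * v)⁻¹)
          + (1 - u)⁻¹ * (1 - v)⁻¹)
        * ((1 - u) * (1 - cq * u) * (1 - cq ^ 2 * u) * (1 - v) * (1 - cq * v))
        = cc ^ 2 * u ^ N *
          (cg * cg * ((1 - cq ^ 2 * u)⁻¹ * (1 - cq * v)⁻¹ *
            ((1 - u) * (1 - cq * u) * (1 - cq ^ 2 * u) * (1 - v) * (1 - cq * v)))
          - cg * ((1 - cq * u)⁻¹ * (1 - v)⁻¹ *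
            ((1 - u) * (1 - cq * u) * (1 - cq ^ 2 * u) * (1 - v) * (1 - cq * v)))
          - cg * ((1 - cq * u)⁻¹ * (1 - cq * v)⁻¹ *
            ((1 - u) * (1 - cq * u) * (1 - cq ^ 2 * u) * (1 - v) * (1 - cq * v)))
          + (1 - u)⁻¹ * (1 - v)⁻¹ *
            ((1 - u) * (1 - cq * u) * (1 - cq ^ 2 * u) * (1 - v) * (1 - cq * v))) := by ring
      _ = _ := by rw [k35, k24, k25, k14]

/-! The numerator polynomial -/

open MvPolynomial in
noncomputable def dzP0 (q g h : ℕ) (b : ℕ → ℕ) : MvPolynomial (Fin 2) ℚ :=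
  (∑ n ∈ range (2*g-1), C (b n : ℚ) * X 0 ^ n *
      ((∑ k ∈ range (2*g-1-n), C (b (n+k) : ℚ) * X 1 ^ k) *
          ((1 - X 1) * (1 - C (q:ℚ) * X 1))
        + X 1 ^ (2*g-1-n) * C ((h:ℚ)/((q:ℚ)-1)) *
          (C ((q:ℚ)^g) * (1 - X 1) - (1 - C (q:ℚ) * X 1))))
    * ((1 - X 0) * (1 - C (q:ℚ) * X 0) * (1 - C ((q:ℚ)^2) * X 0))
  + C (((h:ℚ)/((q:ℚ)-1))^2) * X 0 ^ (2*g-1) *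
      (C ((q:ℚ)^g) * C ((q:ℚ)^g) *
          ((1 - X 0) * (1 - C (q:ℚ) * X 0) * (1 - X 1))
        - C ((q:ℚ)^g) * ((1 - X 0) * (1 - C ((q:ℚ)^2) * X 0) * (1 - C (q:ℚ) * X 1))
        - C ((q:ℚ)^g) * ((1 - X 0) * (1 - C ((q:ℚ)^2) * X 0) * (1 - X 1))
        + (1 - C (q:ℚ) * X 0) * (1 - C ((q:ℚ)^2) * X 0) * (1 - C (q:ℚ) * X 1))

lemma dzP0_eval (q g h : ℕ) (b : ℕ → ℕ) (u v : ℂ) :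
    MvPolynomial.aeval ![u, v] (dzP0 q g h b)
      = (∑ n ∈ range (2*g-1), (b n : ℂ) * u ^ n *
          ((∑ k ∈ range (2*g-1-n), (b (n+k) : ℂ) * v ^ k) *
              ((1 - v) * (1 - (q:ℂ) * v))
            + v ^ (2*g-1-n) * ((h:ℂ)/((q:ℂ)-1)) *
              ((q:ℂ)^g * (1 - v) - (1 - (q:ℂ) * v))))
        * ((1 - u) * (1 - (q:ℂ) * u) * (1 - (q:ℂ)^2 * u))
      + ((h:ℂ)/((q:ℂ)-1))^2 * u ^ (2*g-1) *
          ((q:ℂ)^g * (q:ℂ)^g * ((1 - u) * (1 - (q:ℂ) * u) * (1 - v))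
            - (q:ℂ)^g * ((1 - u) * (1 - (q:ℂ)^2 * u) * (1 - (q:ℂ) * v))
            - (q:ℂ)^g * ((1 - u) * (1 - (q:ℂ)^2 * u) * (1 - v))
            + (1 - (q:ℂ) * u) * (1 - (q:ℂ)^2 * u) * (1 - (q:ℂ) * v)) := by
  simp only [dzP0, map_add, map_sub, map_mul, map_pow, map_sum, map_one,
    MvPolynomial.aeval_X, MvPolynomial.aeval_C, Matrix.cons_val_zero, Matrix.cons_val_one,
    Matrix.head_cons]
  push_cast
  ring

/-! Degree bound toolkit -/

section degtools
open MvPolynomial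
variable {i : Fin 2} {p p1 p2 : MvPolynomial (Fin 2) ℚ} {d d1 d2 : ℕ}

lemma dmul (h1 : degreeOf i p1 ≤ d1) (h2 : degreeOf i p2 ≤ d2) :
    degreeOf i (p1 * p2) ≤ d1 + d2 :=
  (degreeOf_mul_le _ _ _).trans (Nat.add_le_add h1 h2)

lemma dadd (h1 : degreeOf i p1 ≤ d) (h2 : degreeOf i p2 ≤ d) :
    degreeOf i (p1 + p2) ≤ d :=
  (degreeOf_add_le _ _ _).trans (max_le h1 h2)

lemma dsub (h1 : degreeOf i p1 ≤ d) (h2 : degreeOf i p2 ≤ d) :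
    degreeOf i (p1 - p2) ≤ d :=
  (degreeOf_sub_le _ _ _).trans (max_le h1 h2)

lemma dmono (h : degreeOf i p ≤ d1) (hd : d1 ≤ d2) : degreeOf i p ≤ d2 := h.trans hd

lemma dC {a : ℚ} : degreeOf i (C a : MvPolynomial (Fin 2) ℚ) ≤ 0 := le_of_eq (degreeOf_C a i)

lemma done : degreeOf i (1 : MvPolynomial (Fin 2) ℚ) ≤ 0 := by
  simpa using (dC (i := i) (a := 1))

lemma dpow {k : ℕ} (h : degreeOf i p ≤ d) : degreeOf i (p ^ k) ≤ k * d :=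
  (degreeOf_pow_le _ _ _).trans (Nat.mul_le_mul_left _ h)

lemma dsum {s : Finset ℕ} {f : ℕ → MvPolynomial (Fin 2) ℚ}
    (h : ∀ n ∈ s, degreeOf i (f n) ≤ d) : degreeOf i (∑ n ∈ s, f n) ≤ d :=
  (degreeOf_sum_le _ _ _).trans (Finset.sup_le h)

lemma dXs : degreeOf (0 : Fin 2) (X 0 : MvPolynomial (Fin 2) ℚ) ≤ 1 := by simp [degreeOf_X]
lemma dXs' : degreeOf (1 : Fin 2) (X 1 : MvPolynomial (Fin 2) ℚ) ≤ 1 := by simp [degreeOf_X]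
lemma dXo : degreeOf (0 : Fin 2) (X 1 : MvPolynomial (Fin 2) ℚ) ≤ 0 := by simp [degreeOf_X]
lemma dXo' : degreeOf (1 : Fin 2) (X 0 : MvPolynomial (Fin 2) ℚ) ≤ 0 := by simp [degreeOf_X]

lemma d1sub (h : degreeOf i p ≤ d) : degreeOf i (1 - p) ≤ d :=
  dsub (dmono done (Nat.zero_le _)) h

end degtools

open Finset MvPolynomial in
lemma dzP0_deg0 (q g h : ℕ) (b : ℕ → ℕ) (hg : 1 ≤ g) :
    MvPolynomial.degreeOf 0 (dzP0 q g h b) ≤ 2 * g + 1 := by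
  have hYb : ∀ n, degreeOf (0 : Fin 2)
      ((∑ k ∈ range (2*g-1-n), C (b (n+k) : ℚ) * X 1 ^ k) *
          ((1 - X 1) * (1 - C (q:ℚ) * X 1))
        + X 1 ^ (2*g-1-n) * C ((h:ℚ)/((q:ℚ)-1)) *
          (C ((q:ℚ)^g) * (1 - X 1) - (1 - C (q:ℚ) * X 1))) ≤ 0 := by
    intro n
    refine dadd (d := 0) ?_ ?_
    · exact dmono (dmul (dsum (d := 0) fun k _ => dmono (dmul dC (dpow dXo)) (by omega))
        (dmul (d1sub dXo) (d1sub (dmul dC dXo)))) (by omega)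
    · exact dmono (dmul (dmul (dpow dXo) dC)
        (dsub (d := 0) (dmono (dmul dC (d1sub dXo)) (by omega))
          (dmono (d1sub (dmul dC dXo)) (by omega)))) (by omega)
  rw [dzP0]
  refine dadd (d := 2*g+1) ?_ ?_
  · refine dmono (dmul (dsum (d := 2*g-2) fun n hn =>
      dmono (dmul (dmul dC (dpow dXs)) (hYb n)) ?_)
      (dmul (dmul (d1sub dXs) (d1sub (dmul dC dXs))) (d1sub (dmul dC dXs)))) (by omega)
    have := mem_range.mp hn; omega
  · refine dmono (dmul (dmul dC (dpow dXs))
      (dadd (d := 2) (dsub (d := 2) (dsub (d := 2)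
        (dmono (dmul (dmul dC dC)
          (dmul (dmul (d1sub dXs) (d1sub (dmul dC dXs))) (d1sub dXo))) (by omega))
        (dmono (dmul dC (dmul (dmul (d1sub dXs) (d1sub (dmul dC dXs)))
          (d1sub (dmul dC dXo)))) (by omega)))
        (dmono (dmul dC (dmul (dmul (d1sub dXs) (d1sub (dmul dC dXs)))
          (d1sub dXo))) (by omega)))
        (dmono (dmul (dmul (d1sub (dmul dC dXs)) (d1sub (dmul dC dXs)))
          (d1sub (dmul dC dXo))) (by omega))))
      (by omega)

open Finset MvPolynomial in
lemma dzP0_deg1 (q g h : ℕ) (b : ℕ → ℕ) (hg : 1 ≤ g) :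
    MvPolynomial.degreeOf 1 (dzP0 q g h b) ≤ 2 * g := by
  have hYb : ∀ n, n < 2*g-1 → degreeOf (1 : Fin 2)
      ((∑ k ∈ range (2*g-1-n), C (b (n+k) : ℚ) * X 1 ^ k) *
          ((1 - X 1) * (1 - C (q:ℚ) * X 1))
        + X 1 ^ (2*g-1-n) * C ((h:ℚ)/((q:ℚ)-1)) *
          (C ((q:ℚ)^g) * (1 - X 1) - (1 - C (q:ℚ) * X 1))) ≤ 2*g := by
    intro n hn
    refine dadd (d := 2*g) ?_ ?_
    · refine dmono (dmul (dsum (d := 2*g-2) fun k hk =>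
        dmono (dmul dC (dpow dXs')) ?_)
        (dmul (d1sub dXs') (d1sub (dmul dC dXs')))) (by omega)
      have := mem_range.mp hk; omega
    · exact dmono (dmul (dmul (dpow dXs') dC)
        (dsub (d := 1) (dmono (dmul dC (d1sub dXs')) (by omega))
          (dmono (d1sub (dmul dC dXs')) (by omega)))) (by omega)
  rw [dzP0]
  refine dadd (d := 2*g) ?_ ?_
  · exact dmono (dmul (dsum (d := 2*g) fun n hn =>
      dmono (dmul (dmul dC (dpow dXo')) (hYb n (mem_range.mp hn))) (by omega))
      (dmul (dmul (d1sub dXo') (d1sub (dmul dC dXo'))) (d1sub (dmul dC dXo')))) (by omega)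
  · refine dmono (dmul (dmul dC (dpow dXo'))
      (dadd (d := 1) (dsub (d := 1) (dsub (d := 1)
        (dmono (dmul (dmul dC dC)
          (dmul (dmul (d1sub dXo') (d1sub (dmul dC dXo'))) (d1sub dXs'))) (by omega))
        (dmono (dmul dC (dmul (dmul (d1sub dXo') (d1sub (dmul dC dXo')))
          (d1sub (dmul dC dXs')))) (by omega)))
        (dmono (dmul dC (dmul (dmul (d1sub dXo') (d1sub (dmul dC dXo')))
          (d1sub dXs'))) (by omega)))
        (dmono (dmul (dmul (d1sub (dmul dC dXo')) (d1sub (dmul dC dXo')))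
          (d1sub (dmul dC dXs'))) (by omega))))
      (by omega)

/-- Let `q ≥ 2`, `g ≥ 1`, `h ≥ 1` and `(b_n)` naturals with
`b_n = h(q^{n−g+1}−1)/(q−1)` for `n > 2g − 2`. Then there is a polynomial
`P(X, Y)` over `ℚ`, of degree `≤ 2g + 1` in `X` and `≤ (1+2+⋯+2g) + 2g − 2`
in `Y`, such that for `Re(s+w) > 2`, `Re(w) > 1`, with `u = q^{−(s+w)}` and
`v = q^{−w}`, one has `Z_2(K; s, w) = P(u,v)/Q(u,v)`, where
`Q(u,v) = (1−u)(1−qu)(1−q²u)(1−v)(1−qv)·∏_{n=0}^{2g−2} v^n` is nonzero on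
this region. -/
theorem double_zeta_genus_ge_one_rationality
    (q g h : ℕ) (hq : 2 ≤ q) (hg : 1 ≤ g) (hh : 1 ≤ h)
    (b : ℕ → ℕ)
    (hb : ∀ n : ℕ, 2 * g - 2 < n → b n * (q - 1) = h * (q ^ (n - g + 1) - 1)) :
    ∃ P : MvPolynomial (Fin 2) ℚ,
      MvPolynomial.degreeOf 0 P ≤ 2 * g + 1 ∧
      MvPolynomial.degreeOf 1 P ≤ (∑ i ∈ Finset.range (2 * g + 1), i) + 2 * g - 2 ∧
      ∀ s w : ℂ, 2 < (s + w).re → 1 < w.re →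
        ∀ u v : ℂ, u = (q : ℂ) ^ (-(s + w)) → v = (q : ℂ) ^ (-w) →
          ((1 - u) * (1 - (q : ℂ) * u) * (1 - (q : ℂ) ^ 2 * u) * (1 - v) *
              (1 - (q : ℂ) * v) * ∏ n ∈ Finset.range (2 * g - 1), v ^ n) ≠ 0 ∧
          (∑' p : {p : ℕ × ℕ // p.1 ≤ p.2},
              (b p.1.1 : ℂ) * (b p.1.2 : ℂ) *
                (q : ℂ) ^ (-(p.1.1 : ℂ) * s) * (q : ℂ) ^ (-(p.1.2 : ℂ) * w)) =
            MvPolynomial.aeval ![u, v] P /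
              ((1 - u) * (1 - (q : ℂ) * u) * (1 - (q : ℂ) ^ 2 * u) * (1 - v) *
                (1 - (q : ℂ) * v) * ∏ n ∈ Finset.range (2 * g - 1), v ^ n) := by
  classical
  set M : ℕ := ∑ n ∈ Finset.range (2 * g - 1), n with hM
  refine ⟨dzP0 q g h b * MvPolynomial.X 1 ^ M, ?_, ?_, ?_⟩
  · exact dmono (dmul (dzP0_deg0 q g h b hg) (dpow dXo)) (by omega)
  · refine dmono (dmul (dzP0_deg1 q g h b hg) (dpow dXs')) ?_
    rw [show 2 * g + 1 = (2 * g - 1) + 1 + 1 from by omega, Finset.sum_range_succ,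
      Finset.sum_range_succ, ← hM]
    omega
  intro s w hsw hw u v huu hvv
  have hq0R : (0 : ℝ) < (q : ℝ) := by positivity
  have hq1R : (1 : ℝ) < (q : ℝ) := by exact_mod_cast hq.trans_lt' one_lt_two
  have hq0C : (q : ℂ) ≠ 0 := Nat.cast_ne_zero.mpr (by omega)
  have hnu : ‖u‖ = (q : ℝ) ^ (-(s + w).re) := by
    rw [huu, Complex.norm_natCast_cpow_of_pos (by omega), Complex.neg_re]
  have hnv : ‖v‖ = (q : ℝ) ^ (-w.re) := by
    rw [hvv, Complex.norm_natCast_cpow_of_pos (by omega), Complex.neg_re]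
  have hu2 : (q : ℝ) ^ 2 * ‖u‖ < 1 := by
    rw [hnu, ← Real.rpow_natCast (q : ℝ) 2, ← Real.rpow_add hq0R]
    apply Real.rpow_lt_one_of_one_lt_of_neg hq1R
    push_cast
    linarith
  have hv1 : (q : ℝ) * ‖v‖ < 1 := by
    rw [hnv]
    nth_rewrite 1 [← Real.rpow_one (q : ℝ)]
    rw [← Real.rpow_add hq0R]
    apply Real.rpow_lt_one_of_one_lt_of_neg hq1R
    linarith
  have hu0 : (0 : ℝ) ≤ ‖u‖ := norm_nonneg u
  have hv0 : (0 : ℝ) ≤ ‖v‖ := norm_nonneg v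
  have hqR2 : (2 : ℝ) ≤ (q : ℝ) := by exact_mod_cast hq
  have hvn : ‖v‖ < 1 := by nlinarith
  have hun : ‖u‖ < 1 := by nlinarith
  have hqvn : ‖(q : ℂ) * v‖ < 1 := by rw [norm_mul, Complex.norm_natCast]; exact hv1
  have hqun : ‖(q : ℂ) * u‖ < 1 := by rw [norm_mul, Complex.norm_natCast]; nlinarith
  have hq2un : ‖(q : ℂ) ^ 2 * u‖ < 1 := by
    rw [norm_mul, norm_pow, Complex.norm_natCast]; exact hu2
  have hvne : v ≠ 0 := by
    have : (0 : ℝ) < ‖v‖ := by rw [hnv]; positivity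
    exact norm_pos_iff.mp this
  have hprodv : ∏ n ∈ Finset.range (2 * g - 1), v ^ n = v ^ M := by
    rw [hM, Finset.prod_pow_eq_pow_sum]
  have hQ0ne : (1 - u) * (1 - (q : ℂ) * u) * (1 - (q : ℂ) ^ 2 * u) * (1 - v) *
      (1 - (q : ℂ) * v) ≠ 0 :=
    mul_ne_zero (mul_ne_zero (mul_ne_zero (mul_ne_zero (geo_ne u hun)
      (geo_ne _ hqun)) (geo_ne _ hq2un)) (geo_ne v hvn)) (geo_ne _ hqvn)
  have hQne : (1 - u) * (1 - (q : ℂ) * u) * (1 - (q : ℂ) ^ 2 * u) * (1 - v) *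
      (1 - (q : ℂ) * v) * ∏ n ∈ Finset.range (2 * g - 1), v ^ n ≠ 0 := by
    rw [hprodv]
    exact mul_ne_zero hQ0ne (pow_ne_zero _ hvne)
  refine ⟨hQne, ?_⟩
  -- convert the sum over the subtype to a sum over ℕ × ℕ
  have hsummand : ∀ nk : ℕ × ℕ,
      (b ((leEquiv nk).1.1) : ℂ) * (b ((leEquiv nk).1.2) : ℂ) *
        (q : ℂ) ^ (-(((leEquiv nk).1.1 : ℕ) : ℂ) * s) *
        (q : ℂ) ^ (-(((leEquiv nk).1.2 : ℕ) : ℂ) * w)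
      = (b nk.1 : ℂ) * (b (nk.1 + nk.2) : ℂ) * u ^ nk.1 * v ^ nk.2 := by
    rintro ⟨n, k⟩
    simp only [leEquiv, Equiv.coe_fn_mk]
    have e1 : (q : ℂ) ^ (-(n : ℂ) * s) * (q : ℂ) ^ (-(((n + k : ℕ)) : ℂ) * w)
        = u ^ n * v ^ k := by
      rw [← Complex.cpow_add _ _ hq0C,
        show -(n : ℂ) * s + -(((n + k : ℕ)) : ℂ) * w
          = (n : ℂ) * (-(s + w)) + (k : ℂ) * (-w) from by push_cast; ring,
        Complex.cpow_add _ _ hq0C, Complex.cpow_nat_mul, Complex.cpow_nat_mul, huu, hvv]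
    calc (b n : ℂ) * (b (n + k) : ℂ) * (q : ℂ) ^ (-(n : ℂ) * s) *
          (q : ℂ) ^ (-(((n + k : ℕ)) : ℂ) * w)
        = (b n : ℂ) * (b (n + k) : ℂ) *
            ((q : ℂ) ^ (-(n : ℂ) * s) * (q : ℂ) ^ (-(((n + k : ℕ)) : ℂ) * w)) := by ring
      _ = _ := by rw [e1]; ring
  have key : (∑' p : {p : ℕ × ℕ // p.1 ≤ p.2},
      (b p.1.1 : ℂ) * (b p.1.2 : ℂ) *
        (q : ℂ) ^ (-(p.1.1 : ℂ) * s) * (q : ℂ) ^ (-(p.1.2 : ℂ) * w))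
      = ∑' p : ℕ × ℕ, ((b p.1 : ℂ) * (b (p.1 + p.2) : ℂ) * u ^ p.1 * v ^ p.2) := by
    rw [← Equiv.tsum_eq leEquiv (fun p : {p : ℕ × ℕ // p.1 ≤ p.2} =>
      (b p.1.1 : ℂ) * (b p.1.2 : ℂ) *
        (q : ℂ) ^ (-(p.1.1 : ℂ) * s) * (q : ℂ) ^ (-(p.1.2 : ℂ) * w))]
    exact tsum_congr hsummand
  rw [key, dz_tsum_eq q g h hq hg b hb u v hu2 hv1]
  -- now the rational-function identity
  rw [map_mul, map_pow, MvPolynomial.aeval_X, hprodv, Matrix.cons_val_one, Matrix.cons_val_zero,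
    mul_div_mul_right _ _ (pow_ne_zero M hvne), eq_div_iff hQ0ne, dzP0_eval]
  exact dzEQ0 (q : ℂ) ((q : ℂ) ^ g) ((h : ℂ) / ((q : ℂ) - 1)) u v
    (fun n => ∑ k ∈ range (2 * g - 1 - n), (b (n + k) : ℂ) * v ^ k)
    (fun n => (b n : ℂ)) (2 * g - 1)
    (geo_ne u hun) (geo_ne _ hqun) (geo_ne _ hq2un) (geo_ne v hvn) (geo_ne _ hqvn)
end
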